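/- Let Λ be a lattice with minimum m in a Euclidean space E, and let x, y ∈ Λ be nonzero vectors with y ≠ x, y ≠ −x, and y ≡ x (mod 2). Then N(x) + N(y) ≥ 4m. -/
import Mathlib


open scoped InnerProductSpace

/-- Let `Λ` be a lattice with minimum `m` in a Euclidean space `E`,
and let `x, y ∈ Λ` be nonzero vectors with `y ≠ x`, `y ≠ -x`, and `y ≡ x (mod 2)`.
Then `N(x) + N(y) ≥ 4m`. -/
theorem norm_add_norm_ge_four_mul_min
    {E : Type*} [NormedAddCommGroup E] [InnerProductSpace ℝ E] [FiniteDimensional ℝ E]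
    (Λ : AddSubgroup E) (hdisc : DiscreteTopology Λ) (m : ℝ)
    (hmin : IsLeast {r : ℝ | ∃ x ∈ Λ, x ≠ 0 ∧ ⟪x, x⟫_ℝ = r} m)
    (x y : E) (hx : x ∈ Λ) (hy : y ∈ Λ)
    (hx0 : x ≠ 0) (hy0 : y ≠ 0) (hyx : y ≠ x) (hyx' : y ≠ -x)
    (hcong : ∃ z ∈ Λ, y - x = (2 : ℝ) • z) :
    4 * m ≤ ⟪x, x⟫_ℝ + ⟪y, y⟫_ℝ := by
  obtain ⟨z, hzΛ, hz⟩ := hcong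
  have hz0 : z ≠ 0 := by
    rintro rfl
    apply hyx
    have := hz
    simp at this
    exact sub_eq_zero.mp this
  have hw0 : x + z ≠ 0 := by
    intro h
    apply hyx'
    have : y = x + (2:ℝ) • z := by rw [← hz]; abel
    rw [this]
    have hzx : z = -x := by linear_combination (norm := module) h
    rw [hzx]; module
  have h1 : m ≤ ⟪z, z⟫_ℝ := hmin.2 ⟨z, hzΛ, hz0, rfl⟩
  have h2 : m ≤ ⟪x + z, x + z⟫_ℝ := hmin.2 ⟨x + z, Λ.add_mem hx hzΛ, hw0, rfl⟩
  have hy' : y = x + (2:ℝ) • z := by rw [← hz]; abel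
  have key : ⟪x, x⟫_ℝ + ⟪y, y⟫_ℝ = 2 * ⟪z, z⟫_ℝ + 2 * ⟪x + z, x + z⟫_ℝ := by
    rw [hy']
    simp only [inner_add_add_self, real_inner_smul_left, real_inner_smul_right,
      real_inner_comm z x]
    ring
  linarith
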